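/- arXiv:2410.15565 — 3 statements merged into one kernel-verified Lean document; each statement's English description precedes it below -/
import Mathlib

section
/- For real γ with 1 ≤ γ ≤ 13/12, set α = β = √(1 − 3γ/4), n = (4/3)^(d/2), C(α) = (1−α²)^(d/2) = (3γ/4)^(d/2), and t = (1 − (4/3)α²)^(−d/2) = (3/(3γ−1))^(d/2). Then n·t·C(α) = n²·t·C(α)²/γ^(d/2) = (3γ/(3γ−1))^(d/2), and moreover γ^d ≤ n·t·C(α)² holds if and only if γ ≤ 13/12. -/
/-- Optimization of the QRAM-bounded quantum LSF sieve: with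
α = β = √(1 − 3γ/4), the terms n·t·C(α) and n²·t·C(α)²/γ^(d/2) both
equal (3γ/(3γ−1))^(d/2); also C(α) = (3γ/4)^(d/2), t = (3/(3γ−1))^(d/2),
and the QRAM constraint γ^d ≤ n·t·C(α)² holds iff γ ≤ 13/12. -/
theorem qram_bounded_lsf_optimization (d γ : ℝ) (hd : 0 < d)
    (hγ : 1 ≤ γ) (hγ' : γ ≤ 4/3) :
    let α : ℝ := Real.sqrt (1 - 3*γ/4)
    let n : ℝ := (4/3) ^ (d/2)
    let C : ℝ → ℝ := fun x => (1 - x^2) ^ (d/2)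
    let t : ℝ := (1 - (4/3)*α^2) ^ (-(d/2))
    C α = (3*γ/4) ^ (d/2) ∧
    t = (3/(3*γ-1)) ^ (d/2) ∧
    n * t * C α = (3*γ/(3*γ-1)) ^ (d/2) ∧
    n^2 * t * (C α)^2 / γ ^ (d/2) = (3*γ/(3*γ-1)) ^ (d/2) ∧
    (γ ^ d ≤ n * t * (C α)^2 ↔ γ ≤ 13/12) := by
  intro α n C t
  have hα2 : α ^ 2 = 1 - 3*γ/4 := Real.sq_sqrt (by linarith)
  have h31 : (0:ℝ) < 3*γ - 1 := by linarith
  have hγ0 : (0:ℝ) < γ := by linarith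
  have he : (0:ℝ) < d/2 := by linarith
  have hC : C α = (3*γ/4) ^ (d/2) := by
    show (1 - α^2) ^ (d/2) = (3*γ/4) ^ (d/2)
    rw [hα2]; ring_nf
  have ht : t = (3/(3*γ-1)) ^ (d/2) := by
    show (1 - (4/3)*α^2) ^ (-(d/2)) = (3/(3*γ-1)) ^ (d/2)
    rw [hα2]
    have h1 : (1 - 4/3*(1 - 3*γ/4)) = (3*γ-1)/3 := by ring
    rw [h1, Real.rpow_neg (by positivity), ← Real.inv_rpow (by positivity),
      inv_div]
  have key : n * t * C α = (3*γ/(3*γ-1)) ^ (d/2) := by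
    rw [hC, ht]
    show (4/3:ℝ) ^ (d/2) * (3/(3*γ-1)) ^ (d/2) * (3*γ/4) ^ (d/2) = _
    rw [← Real.mul_rpow (by positivity) (by positivity),
      ← Real.mul_rpow (by positivity) (by positivity)]
    congr 1
    field_simp
  refine ⟨hC, ht, key, ?_, ?_⟩
  · rw [hC, ht]
    show ((4/3:ℝ) ^ (d/2))^2 * (3/(3*γ-1)) ^ (d/2) * ((3*γ/4) ^ (d/2))^2 / γ ^ (d/2) = _
    rw [← Real.rpow_natCast ((4/3:ℝ) ^ (d/2)) 2, ← Real.rpow_natCast ((3*γ/4:ℝ) ^ (d/2)) 2,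
      ← Real.rpow_mul (by norm_num), ← Real.rpow_mul (by positivity),
      mul_comm (d/2) (2:ℕ), Nat.cast_ofNat]
    rw [show (2:ℝ) * (d/2) = d/2 + d/2 by ring,
      Real.rpow_add (by norm_num), Real.rpow_add (by positivity)]
    rw [← Real.mul_rpow (by positivity) (by positivity),
      ← Real.mul_rpow (by positivity) (by positivity),
      ← Real.mul_rpow (by positivity) (by positivity),
      ← Real.mul_rpow (by positivity) (by positivity),
      ← Real.div_rpow (by positivity) (by positivity)]
    congr 1
    field_simp
  · rw [hC, ht]
    show γ ^ d ≤ (4/3:ℝ) ^ (d/2) * (3/(3*γ-1)) ^ (d/2) * ((3*γ/4) ^ (d/2))^2 ↔ _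
    rw [← Real.rpow_natCast ((3*γ/4:ℝ) ^ (d/2)) 2, ← Real.rpow_mul (by positivity),
      mul_comm (d/2) ((2:ℕ):ℝ), Nat.cast_ofNat,
      show (2:ℝ) * (d/2) = d/2 + d/2 by ring,
      Real.rpow_add (by positivity),
      ← Real.mul_rpow (by positivity) (by positivity),
      ← Real.mul_rpow (by positivity) (by positivity),
      ← Real.mul_rpow (by positivity) (by positivity),
      show γ ^ d = (γ*γ) ^ (d/2) by
        rw [Real.mul_rpow hγ0.le hγ0.le, ← Real.rpow_add hγ0]; ring_nf,
      Real.rpow_le_rpow_iff (by positivity) (by positivity) he]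
    rw [show (4/3:ℝ) * (3/(3*γ-1)) * (3*γ/4 * (3*γ/4)) = 9*(γ*γ)/(4*(3*γ-1)) by
      field_simp; ring, le_div_iff₀ (by positivity)]
    constructor <;> intro h <;> nlinarith [mul_pos hγ0 hγ0]
end

section
/- The polynomial equation 32(2α⁴ − α³ − 3α² + α) + 5 = 0 has a unique root α in the open interval (0.44, 0.45), and for this α with β = 1/2 the quantity t·C(β)² = C(α) holds where C(x) = (1−x²)^{d/2} and t = (1 − (4/3)(α² − αβ + β²))^{−d/2}, i.e., (1−α²)·(1 − (4/3)(α² − α/2 + 1/4)) = (1 − 1/4)² = 9/16 — equivalently, the exponent-level identity (1−β²)² = (1−α²)·(1 − (4/3)(α² − αβ + β²)) with β = 1/2 is equivalent to 32(2α⁴ − α³ − 3α² + α) + 5 = 0. -/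
private lemma quartic_unique (a b : ℝ) (ha : a ∈ Set.Ioo (0.44:ℝ) 0.45)
    (hb : b ∈ Set.Ioo (0.44:ℝ) 0.45)
    (hfa : 32*(2*a^4 - a^3 - 3*a^2 + a) + 5 = 0)
    (hfb : 32*(2*b^4 - b^3 - 3*b^2 + b) + 5 = 0) : a = b := by
  obtain ⟨ha1, ha2⟩ := ha
  obtain ⟨hb1, hb2⟩ := hb
  have hB : 64*(a^3+a^2*b+a*b^2+b^3) - 32*(a^2+a*b+b^2) - 96*(a+b) + 32 < 0 := by
    nlinarith [mul_pos (mul_pos (by linarith : (0:ℝ) < a) (by linarith : (0:ℝ) < a)) (by linarith : (0:ℝ) < a),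
      sq_nonneg (a - b), sq_nonneg (a + b), mul_pos (by linarith : (0:ℝ) < a) (by linarith : (0:ℝ) < b),
      mul_lt_mul_of_pos_left ha2 (by positivity : (0:ℝ) < a*a)]
  have key : (a - b) * (64*(a^3+a^2*b+a*b^2+b^3) - 32*(a^2+a*b+b^2) - 96*(a+b) + 32) = 0 := by
    linear_combination hfa - hfb
  rcases mul_eq_zero.mp key with h | h
  · linarith
  · linarith

/-- The quartic 32(2α⁴ − α³ − 3α² + α) + 5 = 0 has a unique root in
(0.44, 0.45), and for β = 1/2 the exponent-level identity
(1−β²)² = (1−α²)·(1 − (4/3)(α² − αβ + β²)) is equivalent to this quartic. -/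
theorem heiser_optimization_quartic :
    (∃! α : ℝ, α ∈ Set.Ioo (0.44:ℝ) 0.45 ∧
      32*(2*α^4 - α^3 - 3*α^2 + α) + 5 = 0) ∧
    (∀ α : ℝ,
      (1 - ((1:ℝ)/2)^2)^2
        = (1 - α^2) * (1 - (4/3)*(α^2 - α*(1/2) + ((1:ℝ)/2)^2))
      ↔ 32*(2*α^4 - α^3 - 3*α^2 + α) + 5 = 0) := by
  constructor
  · -- existence via IVT
    have hcont : ContinuousOn (fun x : ℝ => 32*(2*x^4 - x^3 - 3*x^2 + x) + 5)
        (Set.Icc (0.44:ℝ) 0.45) := (by continuity : Continuous _).continuousOn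
    have hsub := intermediate_value_Ioo' (by norm_num : (0.44:ℝ) ≤ 0.45) hcont
    have h0 : (0:ℝ) ∈ Set.Ioo (32*(2*(0.45:ℝ)^4 - 0.45^3 - 3*0.45^2 + 0.45) + 5)
        (32*(2*(0.44:ℝ)^4 - 0.44^3 - 3*0.44^2 + 0.44) + 5) := by
      constructor <;> norm_num
    obtain ⟨α, hα, hfα⟩ := hsub h0
    exact ⟨α, ⟨hα, hfα⟩, fun y ⟨hy, hfy⟩ => quartic_unique y α hy hα hfy hfα⟩
  · intro α
    constructor
    · intro h; linear_combination (-48 : ℝ) * h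
    · intro h; linear_combination (-1/48 : ℝ) * h
end

section
/- For all γ ∈ [1, 13/12], the inequality γ − 2/3 + (2/3)·√(1 − (3/4)γ) ≥ (3γ−1)/(3γ) holds, with equality only at γ = 1; equivalently, the Heiser-based trade-off T₅ = (γ − 2/3 + (2/3)√(1 − 3γ/4))^{−d/2} is at most the query-wise trade-off T₂ = (3γ/(3γ−1))^{d/2} for the same QRAM budget γ^d. -/
/-- For γ ∈ [1, 13/12], γ − 2/3 + (2/3)√(1 − 3γ/4) ≥ (3γ−1)/(3γ), with
equality only at γ = 1; equivalently the Heiser trade-off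
T₅ = f(γ)^(−d/2) is at most the query-wise trade-off T₂ = (3γ/(3γ−1))^(d/2). -/
theorem heiser_beats_querywise :
    ∀ γ ∈ Set.Icc (1:ℝ) (13/12),
      ((3*γ-1)/(3*γ) ≤ γ - 2/3 + (2/3)*Real.sqrt (1 - (3/4)*γ)) ∧
      (γ - 2/3 + (2/3)*Real.sqrt (1 - (3/4)*γ) = (3*γ-1)/(3*γ) → γ = 1) ∧
      ∀ d : ℝ, 0 ≤ d →
        (γ - 2/3 + (2/3)*Real.sqrt (1 - (3/4)*γ)) ^ (-(d/2))
          ≤ (3*γ/(3*γ-1)) ^ (d/2) := by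
  rintro γ ⟨h1, h2⟩
  set s := Real.sqrt (1 - (3/4)*γ) with hs
  have hnn : (0:ℝ) ≤ 1 - (3/4)*γ := by linarith
  have hs0 : 0 ≤ s := Real.sqrt_nonneg _
  have hs2 : s^2 = 1 - (3/4)*γ := Real.sq_sqrt hnn
  have hγ0 : 0 < 3*γ := by linarith
  have hγ1 : 0 < 3*γ - 1 := by linarith
  -- key inequality
  have key : (3*γ-1)/(3*γ) ≤ γ - 2/3 + (2/3)*s := by
    rw [div_le_iff₀ hγ0]
    nlinarith [sq_nonneg (2*γ*s - (5*γ - 1 - 3*γ^2)), sq_nonneg (γ-1),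
      mul_nonneg hs0 (le_of_lt hγ0), sq_nonneg s]
  refine ⟨key, ?_, ?_⟩
  · intro heq
    have heq' : 2*γ*s = 5*γ - 1 - 3*γ^2 := by
      field_simp at heq
      nlinarith [heq]
    have hq : 0 < -9*γ^3 + 18*γ^2 - 9*γ + 1 := by nlinarith [sq_nonneg (γ-1)]
    have : (γ - 1) * (-9*γ^3 + 18*γ^2 - 9*γ + 1) = 0 := by nlinarith [heq', hs2]
    have := mul_eq_zero.mp this
    rcases this with h | h
    · linarith
    · linarith
  · intro d hd
    have hf0 : (0:ℝ) < (3*γ-1)/(3*γ) := div_pos hγ1 hγ0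
    have hfpos : (0:ℝ) < γ - 2/3 + (2/3)*s := lt_of_lt_of_le hf0 key
    rw [Real.rpow_neg hfpos.le, ← Real.inv_rpow hfpos.le]
    apply Real.rpow_le_rpow (inv_nonneg.mpr hfpos.le) _ (by linarith)
    calc (γ - 2/3 + (2/3)*s)⁻¹ ≤ ((3*γ-1)/(3*γ))⁻¹ := inv_anti₀ hf0 key
      _ = 3*γ/(3*γ-1) := inv_div _ _
end
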